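/- Let u₀ be C¹ with inf u₀' < 0 and y ↦ y + t u₀(y) proper. Define t_c := −1/inf_{y} u₀'(y) > 0. Then for 0 < t < t_c the map y ↦ y + t u₀(y) is strictly increasing (hence injective), and for every t > t_c there exist x with at least three distinct solutions y of x = y + t u₀(y), provided the infimum of u₀' is attained at a point where u₀' is not locally constant at its minimum (e.g., u₀''' > 0 at the minimizer of u₀'). -/

import Mathlib

/-- let `u₀` be `C³` and bounded, with `u₀'` attaining a negative minimum
at the unique point `y*`, and `u₀'''(y*) > 0`.  Set `t_c := −1/u₀'(y*) > 0`.  Then for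
`0 < t < t_c` the characteristic map `y ↦ y + t u₀(y)` is strictly increasing (hence
injective), while for every `t > t_c` there is an `x` with at least three distinct
solutions `y` of `x = y + t u₀(y)`. -/
theorem breaking_time_characteristics (u₀ : ℝ → ℝ) (hu₀ : ContDiff ℝ 3 u₀)
    (hbdd : ∃ Cb : ℝ, ∀ y : ℝ, |u₀ y| ≤ Cb)
    (ystar : ℝ)
    (hmin : ∀ y : ℝ, deriv u₀ ystar ≤ deriv u₀ y)
    (huniq : ∀ y : ℝ, deriv u₀ y = deriv u₀ ystar → y = ystar)
    (hneg : deriv u₀ ystar < 0)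
    (h3 : 0 < deriv (deriv (deriv u₀)) ystar) :
    (0 < -1 / deriv u₀ ystar) ∧
    (∀ t : ℝ, 0 < t → t < -1 / deriv u₀ ystar →
      StrictMono (fun y => y + t * u₀ y)) ∧
    (∀ t : ℝ, -1 / deriv u₀ ystar < t →
      ∃ x y₁ y₂ y₃ : ℝ, y₁ ≠ y₂ ∧ y₁ ≠ y₃ ∧ y₂ ≠ y₃ ∧
        x = y₁ + t * u₀ y₁ ∧ x = y₂ + t * u₀ y₂ ∧ x = y₃ + t * u₀ y₃) := by
  have hd : Differentiable ℝ u₀ := hu₀.differentiable (by norm_num)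
  have hdc : Continuous (deriv u₀) := hu₀.continuous_deriv (by norm_num)
  have hder : ∀ t y : ℝ, deriv (fun z => z + t * u₀ z) y = 1 + t * deriv u₀ y := by
    intro t y
    have h1 : DifferentiableAt ℝ (fun z : ℝ => z) y := differentiableAt_id
    have h2 : DifferentiableAt ℝ (fun z => t * u₀ z) y := (hd y).const_mul t
    rw [deriv_fun_add h1 h2, deriv_const_mul t (hd y), deriv_id'']
  have htc : 0 < -1 / deriv u₀ ystar := div_pos_of_neg_of_neg (by norm_num) hneg
  refine ⟨htc, ?_, ?_⟩
  · intro t ht htlt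
    have hkey : -1 < t * deriv u₀ ystar := (lt_div_iff_of_neg hneg).mp htlt
    apply strictMono_of_deriv_pos
    intro y
    rw [hder]
    have h1 : t * deriv u₀ ystar ≤ t * deriv u₀ y :=
      mul_le_mul_of_nonneg_left (hmin y) ht.le
    linarith
  · intro t ht
    have ht0 : 0 < t := lt_trans htc ht
    have hkey : t * deriv u₀ ystar < -1 := (div_lt_iff_of_neg hneg).mp ht
    obtain ⟨Cb, hCb⟩ := hbdd
    have hCb0 : 0 ≤ Cb := le_trans (abs_nonneg _) (hCb 0)
    set f : ℝ → ℝ := fun z => z + t * u₀ z with hf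
    have hfc : Continuous f := continuous_id.add (continuous_const.mul hu₀.continuous)
    -- derivative negative near ystar
    have hgc : Continuous (fun y => 1 + t * deriv u₀ y) :=
      continuous_const.add (continuous_const.mul hdc)
    have hgy : (1 : ℝ) + t * deriv u₀ ystar < 0 := by linarith
    have hopen : IsOpen {y : ℝ | 1 + t * deriv u₀ y < 0} :=
      isOpen_lt hgc continuous_const
    obtain ⟨δ, hδ, hball⟩ := Metric.isOpen_iff.mp hopen ystar hgy
    set a := ystar - δ / 2
    set b := ystar + δ / 2
    have hab : a < b := by simp only [a, b]; linarith
    have hIcc : Set.Icc a b ⊆ Metric.ball ystar δ := by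
      intro y hy
      rw [Metric.mem_ball, Real.dist_eq]
      rw [Set.mem_Icc] at hy
      rw [abs_lt]
      constructor <;> [skip; skip] <;> simp only [a, b] at hy <;> linarith [hy.1, hy.2]
    have hanti : StrictAntiOn f (Set.Icc a b) := by
      apply strictAntiOn_of_deriv_neg (convex_Icc a b) hfc.continuousOn
      intro y hy
      rw [interior_Icc] at hy
      rw [hder]
      exact hball (hIcc (Set.mem_Icc_of_Ioo hy))
    have hfab : f b < f a := hanti (Set.left_mem_Icc.mpr hab.le) (Set.right_mem_Icc.mpr hab.le) hab
    have hfval : ∀ y : ℝ, f y = y + t * u₀ y := fun _ => rfl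
    -- bounds on f
    have hflb : ∀ y : ℝ, y - t * Cb ≤ f y := by
      intro y
      have h1 := (abs_le.mp (hCb y)).1
      have h2 : -(t * Cb) ≤ t * u₀ y := by nlinarith
      rw [hfval]; linarith
    have hfub : ∀ y : ℝ, f y ≤ y + t * Cb := by
      intro y
      have h1 := (abs_le.mp (hCb y)).2
      have h2 : t * u₀ y ≤ t * Cb := by nlinarith
      rw [hfval]; linarith
    clear_value f a b
    set x := (f a + f b) / 2 with hx
    have hx1 : f b < x := by rw [hx]; linarith [hfab]
    have hx2 : x < f a := by rw [hx]; linarith [hfab]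
    set M := min a (x - t * Cb - 1) with hM
    have hMa : M ≤ a := min_le_left _ _
    have hfM : f M < x := by
      have h1 := hfub M
      have h2 : M ≤ x - t * Cb - 1 := min_le_right _ _
      linarith
    set N := max b (x + t * Cb + 1) with hN
    have hNb : b ≤ N := le_max_left _ _
    have hfN : x < f N := by
      have h1 := hflb N
      have h2 : x + t * Cb + 1 ≤ N := le_max_right _ _
      linarith
    -- three roots by IVT
    obtain ⟨y₁, hy₁m, hy₁⟩ := intermediate_value_Icc hMa hfc.continuousOn
      (Set.mem_Icc.mpr ⟨hfM.le, hx2.le⟩)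
    obtain ⟨y₂, hy₂m, hy₂⟩ := intermediate_value_Icc' hab.le hfc.continuousOn
      (Set.mem_Icc.mpr ⟨hx1.le, hx2.le⟩)
    obtain ⟨y₃, hy₃m, hy₃⟩ := intermediate_value_Icc hNb hfc.continuousOn
      (Set.mem_Icc.mpr ⟨hx1.le, hfN.le⟩)
    have hy₁a : y₁ < a := by
      rcases lt_or_eq_of_le (Set.mem_Icc.mp hy₁m).2 with h | h
      · exact h
      · exfalso; rw [h] at hy₁; exact absurd hy₁ (by linarith)
    have hy₂a : a < y₂ := by
      rcases lt_or_eq_of_le (Set.mem_Icc.mp hy₂m).1 with h | h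
      · exact h
      · exfalso; rw [← h] at hy₂; exact absurd hy₂ (by linarith)
    have hy₂b : y₂ < b := by
      rcases lt_or_eq_of_le (Set.mem_Icc.mp hy₂m).2 with h | h
      · exact h
      · exfalso; rw [h] at hy₂; exact absurd hy₂ (by linarith)
    have hy₃b : b < y₃ := by
      rcases lt_or_eq_of_le (Set.mem_Icc.mp hy₃m).1 with h | h
      · exact h
      · exfalso; rw [← h] at hy₃; exact absurd hy₃ (by linarith)
    rw [hfval] at hy₁ hy₂ hy₃
    exact ⟨x, y₁, y₂, y₃, by linarith, by linarith, by linarith,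
      hy₁.symm, hy₂.symm, hy₃.symm⟩
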